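/- Let α_1 ≥ α_2 ≥ … ≥ α_n be positive integers with n > 2, let S = Σ_{i=1}^n α_i with S > 2, let β be an integer with 0 < β < S, and let k < n be a positive integer. Consider the EAS instance with T = 2n − k + 2 time slots and n jobs, where job i has r_i = i + 1, d_i = 2n − k + 2, and e_i = S²n² + α_i·(Sn), and where h_1 = k·(S²n²) + β·(Sn); h_t = S − α_{t−1} for t ∈ {2,…,n+1}; h_{n+2} = (n−k)·(S²n²) + (S−β)·(Sn) − S·(n−k−1) − β; and h_t = 0 for t ∈ {n+3,…,2n−k+2}. Then every feasible schedule that schedules all n jobs satisfies: exactly k jobs are scheduled at slots in {2,…,n+1}, the remaining n − k jobs are scheduled at slots in {n+3,…,2n−k+2} (in particular no job is scheduled at slot 1 or slot n+2), and the total energy requirement of the k jobs scheduled in {2,…,n+1} equals k·(S²n²) + β·(Sn), so that the corresponding α-values sum to exactly β. -/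

import Mathlib

/-- The energy available immediately before slot `t`:
the total energy harvestable at slots `1,…,t-1`, minus, for each job `i ∈ J`
scheduled at a slot `σ i < t`, its energy requirement `e i` plus the harvestable
energy `h (σ i)` lost at its execution slot. -/
def energyBefore (e h : ℕ → ℤ) (J : Finset ℕ) (σ : ℕ → ℕ) (t : ℕ) : ℤ :=
  (∑ τ ∈ Finset.Icc 1 (t - 1), h τ) -
    ∑ i ∈ J.filter (fun i => σ i < t), (e i + h (σ i))

/-- A schedule `(J, σ)` is feasible for an EAS instance with `n` jobs, `T` slots,
release times `r`, due dates `d`, energy requirements `e` and harvest profile `h`. -/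
def IsFeasible (n T : ℕ) (r d : ℕ → ℕ) (e h : ℕ → ℤ)
    (J : Finset ℕ) (σ : ℕ → ℕ) : Prop :=
  J ⊆ Finset.Icc 1 n ∧ Set.InjOn σ ↑J ∧
    ∀ i ∈ J, 1 ≤ σ i ∧ σ i ≤ T ∧ r i ≤ σ i ∧ σ i ≤ d i ∧
      e i ≤ energyBefore e h J σ (σ i)


lemma energyBefore_succ (e h : ℕ → ℤ) (J : Finset ℕ) (σ : ℕ → ℕ) (t : ℕ) (ht : 1 ≤ t) :
    energyBefore e h J σ (t + 1) =
      energyBefore e h J σ t + h t - ∑ i ∈ J.filter (fun i => σ i = t), (e i + h (σ i)) := by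
  unfold energyBefore
  have h1 : Finset.Icc 1 (t + 1 - 1) = insert t (Finset.Icc 1 (t - 1)) := by
    ext x; simp [Finset.mem_Icc]; omega
  have h2 : J.filter (fun i => σ i < t + 1)
      = J.filter (fun i => σ i < t) ∪ J.filter (fun i => σ i = t) := by
    rw [← Finset.filter_or]
    apply Finset.filter_congr
    intro i _; omega
  have hdisj : Disjoint (J.filter (fun i => σ i < t)) (J.filter (fun i => σ i = t)) := by
    rw [Finset.disjoint_left]
    intro a ha hb
    simp only [Finset.mem_filter] at ha hb
    omega
  rw [h1, h2, Finset.sum_insert (by simp [Finset.mem_Icc]; omega), Finset.sum_union hdisj]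
  ring

lemma energy_nonneg (e h : ℕ → ℤ) (J : Finset ℕ) (σ : ℕ → ℕ) (T : ℕ)
    (hinj : Set.InjOn σ ↑J)
    (hh : ∀ τ, 1 ≤ τ → τ ≤ T → 0 ≤ h τ)
    (hfeas : ∀ i ∈ J, 1 ≤ σ i ∧ σ i ≤ T ∧ e i ≤ energyBefore e h J σ (σ i)) :
    ∀ t, t ≤ T + 1 → 0 ≤ energyBefore e h J σ t := by
  intro t
  induction t with
  | zero =>
    intro _
    simp [energyBefore]
  | succ t ih =>
    intro ht1
    rcases Nat.eq_zero_or_pos t with h0 | hpos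
    · subst h0
      have h1 : J.filter (fun i => σ i < 1) = ∅ := by
        apply Finset.filter_eq_empty_iff.mpr
        intro i hi
        have := (hfeas i hi).1
        omega
      have h2 : J.filter (fun i => σ i = 0) = ∅ := by
        apply Finset.filter_eq_empty_iff.mpr
        intro i hi
        have := (hfeas i hi).1
        omega
      simp [energyBefore, h1, h2]
    · rw [energyBefore_succ e h J σ t hpos]
      rcases Finset.eq_empty_or_nonempty (J.filter (fun i => σ i = t)) with hemp | ⟨i0, hi0⟩
      · rw [hemp]
        have h1 := ih (by omega)
        have h2 := hh t hpos (by omega)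
        simp; linarith
      · simp only [Finset.mem_filter] at hi0
        obtain ⟨hi0J, hi0σ⟩ := hi0
        have hsingle : J.filter (fun i => σ i = t) = {i0} := by
          ext j
          simp only [Finset.mem_filter, Finset.mem_singleton]
          constructor
          · rintro ⟨hjJ, hjσ⟩
            exact hinj hjJ hi0J (by rw [hjσ, hi0σ])
          · rintro rfl; exact ⟨hi0J, hi0σ⟩
        rw [hsingle, Finset.sum_singleton, hi0σ]
        have := (hfeas i0 hi0J).2.2
        rw [hi0σ] at this
        linarith

set_option maxHeartbeats 2000000 in
/-- Structure of feasible schedules of all `n` jobs in the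
instance of the reduction from k-SUM: exactly `k` jobs run in slots `{2,…,n+1}`,
the other `n - k` jobs run in slots `{n+3,…,2n-k+2}` (no job at slot `1` or
`n+2`), the `k` early jobs have total energy requirement exactly
`k·S²n² + β·Sn`, and their `α`-values sum to `β`. -/
theorem ksum_reduction_structure (n k : ℕ) (α : ℕ → ℤ) (S β : ℤ)
    (hn : 2 < n)
    (hα_pos : ∀ i ∈ Finset.Icc 1 n, 0 < α i)
    (hα_sorted : ∀ i j, 1 ≤ i → i ≤ j → j ≤ n → α j ≤ α i)
    (hS : S = ∑ i ∈ Finset.Icc 1 n, α i) (hS2 : 2 < S)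
    (hβ : 0 < β) (hβS : β < S)
    (hk : 0 < k) (hkn : k < n)
    (r : ℕ → ℕ) (hr : ∀ i, r i = i + 1)
    (d : ℕ → ℕ) (hd : ∀ i, d i = 2 * n - k + 2)
    (e : ℕ → ℤ) (he : ∀ i, e i = S ^ 2 * n ^ 2 + α i * (S * n))
    (h : ℕ → ℤ)
    (hh1 : h 1 = k * (S ^ 2 * n ^ 2) + β * (S * n))
    (hh2 : ∀ t, 2 ≤ t → t ≤ n + 1 → h t = S - α (t - 1))
    (hh3 : h (n + 2) =
      (n - k) * (S ^ 2 * n ^ 2) + (S - β) * (S * n) - S * ((n : ℤ) - k - 1) - β)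
    (hh4 : ∀ t, n + 3 ≤ t → t ≤ 2 * n - k + 2 → h t = 0)
    (σ : ℕ → ℕ)
    (hfeas : IsFeasible n (2 * n - k + 2) r d e h (Finset.Icc 1 n) σ) :
    ((Finset.Icc 1 n).filter (fun i => σ i ∈ Finset.Icc 2 (n + 1))).card = k ∧
    ((Finset.Icc 1 n).filter
      (fun i => σ i ∈ Finset.Icc (n + 3) (2 * n - k + 2))).card = n - k ∧
    (∀ i ∈ Finset.Icc 1 n, σ i ≠ 1 ∧ σ i ≠ n + 2) ∧
    (∑ i ∈ (Finset.Icc 1 n).filter (fun i => σ i ∈ Finset.Icc 2 (n + 1)), e i =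
      k * (S ^ 2 * n ^ 2) + β * (S * n)) ∧
    (∑ i ∈ (Finset.Icc 1 n).filter (fun i => σ i ∈ Finset.Icc 2 (n + 1)), α i
      = β) := by
  unfold IsFeasible at hfeas
  obtain ⟨-, hinj, hfeas⟩ := hfeas
  set J := Finset.Icc 1 n with hJ
  set T := 2 * n - k + 2 with hT
  -- basic numeric facts
  have hn3 : (3:ℤ) ≤ (n:ℤ) := by exact_mod_cast hn
  have hS3 : (3:ℤ) ≤ S := hS2
  have hk1 : (1:ℤ) ≤ (k:ℤ) := by exact_mod_cast hk
  have hkn' : (k:ℤ) + 1 ≤ (n:ℤ) := by exact_mod_cast hkn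
  have hSn9 : (9:ℤ) ≤ S * (n:ℤ) := by
    nlinarith [mul_nonneg (show (0:ℤ) ≤ S - 3 by linarith) (show (0:ℤ) ≤ (n:ℤ) - 3 by linarith)]
  have hSnsq : S * (n:ℤ) ≤ S^2 * (n:ℤ)^2 := by
    nlinarith [mul_nonneg (show (0:ℤ) ≤ S * (n:ℤ) by linarith)
      (show (0:ℤ) ≤ S * (n:ℤ) - 1 by linarith)]
  -- per-job facts
  have hσlb : ∀ i ∈ J, i + 1 ≤ σ i := by
    intro i hi
    have := (hfeas i hi).2.2.1
    rwa [hr] at this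
  have hσ2 : ∀ i ∈ J, 2 ≤ σ i := by
    intro i hi
    have h1 : 1 ≤ i := (Finset.mem_Icc.mp hi).1
    have := hσlb i hi; omega
  have hσT : ∀ i ∈ J, σ i ≤ T := fun i hi => (hfeas i hi).2.1
  have hαS : ∀ j ∈ J, α j ≤ S := by
    intro j hj
    rw [hS]
    exact Finset.single_le_sum (fun i hi => (hα_pos i hi).le) hj
  have hα1 : ∀ j ∈ J, 1 ≤ α j := fun j hj => hα_pos j hj
  -- nonnegativity of h
  have hhn : ∀ τ, 1 ≤ τ → τ ≤ T → 0 ≤ h τ := by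
    intro τ h1 h2
    by_cases e1 : τ = 1
    · subst e1; rw [hh1]
      have q1 : (0:ℤ) ≤ (k:ℤ) * (S^2*(n:ℤ)^2) := by positivity
      have q2 : (0:ℤ) ≤ β * (S*(n:ℤ)) := mul_nonneg hβ.le (by positivity)
      linarith
    · by_cases e2 : τ ≤ n + 1
      · rw [hh2 τ (by omega) e2]
        have : α (τ - 1) ≤ S := hαS (τ - 1) (by rw [hJ]; simp [Finset.mem_Icc]; omega)
        linarith
      · by_cases e3 : τ = n + 2
        · subst e3; rw [hh3]
          have p1 : S^2*(n:ℤ)^2 ≤ ((n:ℤ)-(k:ℤ))*(S^2*(n:ℤ)^2) :=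
            le_mul_of_one_le_left (by positivity) (by linarith)
          have p2 : (0:ℤ) ≤ (S-β)*(S*(n:ℤ)) := mul_nonneg (by linarith) (by positivity)
          have p4 : S*((n:ℤ)-(k:ℤ)-1) ≤ S*(n:ℤ) :=
            mul_le_mul_of_nonneg_left (by linarith) (by linarith)
          have p5 : S ≤ S*(n:ℤ) := le_mul_of_one_le_right (by linarith) (by linarith)
          have p6 : 9*(S*(n:ℤ)) ≤ S^2*(n:ℤ)^2 := by
            nlinarith [mul_le_mul_of_nonneg_right hSn9 (show (0:ℤ) ≤ S*(n:ℤ) by linarith)]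
          linarith
        · rw [hh4 τ (by omega) (by omega)]
  have Enn : ∀ t, t ≤ T + 1 → 0 ≤ energyBefore e h J σ t :=
    energy_nonneg e h J σ T hinj hhn
      (fun i hi => ⟨(hfeas i hi).1, (hfeas i hi).2.1, (hfeas i hi).2.2.2.2⟩)
  -- harvest sums
  have hsum2 : ∑ τ ∈ Finset.Icc 2 (n+1), h τ = S * n - S := by
    have hcongr : ∀ τ ∈ Finset.Icc 2 (n+1), h τ = S - α (τ - 1) := by
      intro τ hτ
      rw [Finset.mem_Icc] at hτ
      exact hh2 τ hτ.1 hτ.2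
    rw [Finset.sum_congr rfl hcongr, Finset.sum_sub_distrib, Finset.sum_const, Nat.card_Icc]
    have hre : ∑ τ ∈ Finset.Icc 2 (n+1), α (τ-1) = ∑ j ∈ Finset.Icc 1 n, α j := by
      have hmap : Finset.Icc 2 (n+1)
          = Finset.map ⟨fun j => j+1, add_left_injective 1⟩ (Finset.Icc 1 n) := by
        ext x
        simp only [Finset.mem_Icc, Finset.mem_map, Function.Embedding.coeFn_mk]
        constructor
        · intro hx; exact ⟨x - 1, by omega, by omega⟩
        · rintro ⟨a, ha, rfl⟩; omega
      rw [hmap, Finset.sum_map]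
      simp only [Function.Embedding.coeFn_mk, Nat.add_sub_cancel]
    rw [hre, ← hJ, ← hS]
    have hcc : n + 1 + 1 - 2 = n := by omega
    rw [hcc, nsmul_eq_mul]
    ring
  have hsum1 : ∑ τ ∈ Finset.Icc 1 (n+1), h τ = h 1 + (S * n - S) := by
    rw [show Finset.Icc 1 (n+1) = insert 1 (Finset.Icc 2 (n+1)) by
      ext x; simp [Finset.mem_Icc]; omega]
    rw [Finset.sum_insert (by simp [Finset.mem_Icc]), hsum2]
  have hsumT : ∑ τ ∈ Finset.Icc 1 T, h τ = h 1 + (S * n - S) + h (n+2) := by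
    have hIoc : ∀ m : ℕ, Finset.Icc 1 m = Finset.Ioc 0 m := by
      intro m; rw [← Finset.Icc_add_one_left_eq_Ioc]; rfl
    have hsplit : (∑ τ ∈ Finset.Ioc 0 (n+2), h τ) + ∑ τ ∈ Finset.Ioc (n+2) T, h τ
        = ∑ τ ∈ Finset.Ioc 0 T, h τ :=
      Finset.sum_Ioc_consecutive h (by omega) (by omega)
    have hzero : ∑ τ ∈ Finset.Ioc (n+2) T, h τ = 0 := by
      apply Finset.sum_eq_zero
      intro τ hτ
      rw [Finset.mem_Ioc] at hτ
      exact hh4 τ (by omega) hτ.2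
    have htop : ∑ τ ∈ Finset.Icc 1 (n+2), h τ = (∑ τ ∈ Finset.Icc 1 (n+1), h τ) + h (n+2) :=
      Finset.sum_Icc_succ_top (by omega) h
    rw [hIoc T, ← hsplit, hzero, ← hIoc (n+2), htop, hsum1, add_zero]
  -- total e
  have hsume : ∑ i ∈ J, e i = (n:ℤ) * (S^2*n^2) + S * (S*n) := by
    rw [Finset.sum_congr rfl (fun i _ => he i), Finset.sum_add_distrib, Finset.sum_const,
      ← Finset.sum_mul, ← hS, hJ, Nat.card_Icc]
    have hcc : n + 1 - 1 = n := by omega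
    rw [hcc, nsmul_eq_mul]
  -- energy before T+1
  have hET : energyBefore e h J σ (T+1)
      = (∑ τ ∈ Finset.Icc 1 T, h τ) - ((∑ i ∈ J, e i) + ∑ i ∈ J, h (σ i)) := by
    unfold energyBefore
    rw [show T + 1 - 1 = T by omega,
      Finset.filter_true_of_mem (fun i hi => Nat.lt_succ_of_le (hσT i hi)),
      Finset.sum_add_distrib]
  -- no job at slot n+2
  have hσne : ∀ i ∈ J, σ i ≠ n + 2 := by
    intro i hi hcon
    have hE := Enn (T+1) le_rfl
    rw [hET] at hE
    have hone : h (σ i) ≤ ∑ j ∈ J, h (σ j) :=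
      Finset.single_le_sum (fun j hj => hhn (σ j) (by have := hσ2 j hj; omega) (hσT j hj)) hi
    rw [hcon, hh3] at hone
    rw [hsumT, hsume, hh1, hh3] at hE
    have p1 : S^2*(n:ℤ)^2 ≤ ((n:ℤ)-(k:ℤ))*(S^2*(n:ℤ)^2) :=
      le_mul_of_one_le_left (by positivity) (by linarith)
    have p2 : (0:ℤ) ≤ (S-β)*(S*(n:ℤ)) := mul_nonneg (by linarith) (by positivity)
    nlinarith [hE, hone, p1, p2, hSnsq]
  have hσne1 : ∀ i ∈ J, σ i ≠ 1 := by
    intro i hi; have := hσ2 i hi; omega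
  -- the two classes of jobs
  have hEarlyEq : J.filter (fun i => σ i ∈ Finset.Icc 2 (n+1))
      = J.filter (fun i => σ i < n + 2) := by
    apply Finset.filter_congr
    intro i hi
    have := hσ2 i hi
    simp only [Finset.mem_Icc]
    omega
  have hLateEq : J.filter (fun i => σ i ∈ Finset.Icc (n+3) T)
      = J.filter (fun i => ¬ σ i < n + 2) := by
    apply Finset.filter_congr
    intro i hi
    have h1 := hσne i hi
    have h2 := hσT i hi
    simp only [Finset.mem_Icc]
    omega
  set F1 := J.filter (fun i => σ i < n + 2) with hF1
  set F2 := J.filter (fun i => ¬ σ i < n + 2) with hF2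
  have hF1mem : ∀ i ∈ F1, i ∈ J ∧ 2 ≤ σ i ∧ σ i ≤ n + 1 := by
    intro i hi
    rw [hF1, Finset.mem_filter] at hi
    exact ⟨hi.1, hσ2 i hi.1, by omega⟩
  have hF2mem : ∀ i ∈ F2, i ∈ J ∧ n + 3 ≤ σ i ∧ σ i ≤ T := by
    intro i hi
    rw [hF2, Finset.mem_filter] at hi
    have := hσne i hi.1
    exact ⟨hi.1, by omega, hσT i hi.1⟩
  have hcardJ : J.card = n := by rw [hJ, Nat.card_Icc]; omega
  have hcards : F1.card + F2.card = n := by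
    rw [hF1, hF2, Finset.card_filter_add_card_filter_not, hcardJ]
  have hc2le : F2.card ≤ n - k := by
    have hle : F2.card ≤ (Finset.Icc (n+3) T).card := by
      apply Finset.card_le_card_of_injOn σ
      · intro i hi
        obtain ⟨hiJ, h3, h4⟩ := hF2mem i hi
        simp only [Finset.coe_Icc, Set.mem_Icc, Finset.mem_Icc]
        exact ⟨h3, h4⟩
      · exact hinj.mono (by rw [hF2]; exact Finset.coe_subset.mpr (Finset.filter_subset _ _))
    rw [Nat.card_Icc] at hle
    omega
  have hc1ge : k ≤ F1.card := by omega
  -- abbreviations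
  set c1 := F1.card with hc1
  set A := ∑ i ∈ F1, α i with hA
  set B := ∑ i ∈ F1, α (σ i - 1) with hB
  -- energy before n+2
  have hEn2 : energyBefore e h J σ (n+2)
      = (h 1 + (S*n - S)) - ∑ i ∈ F1, (e i + h (σ i)) := by
    unfold energyBefore
    rw [show n + 2 - 1 = n + 1 by omega, hsum1, hF1]
  have hconsF1 : ∑ i ∈ F1, (e i + h (σ i))
      = (c1:ℤ) * (S^2*n^2 + S) + (A * (S*n) - B) := by
    have hcongr : ∀ i ∈ F1, e i + h (σ i) = (S^2*(n:ℤ)^2 + S) + (α i * (S*n) - α (σ i - 1)) := by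
      intro i hi
      obtain ⟨hiJ, h2, h3⟩ := hF1mem i hi
      rw [he i, hh2 (σ i) h2 h3]
      ring
    rw [Finset.sum_congr rfl hcongr, Finset.sum_add_distrib, Finset.sum_const,
      Finset.sum_sub_distrib, ← Finset.sum_mul, nsmul_eq_mul, ← hA, ← hB, ← hc1]
  -- bounds on A and B
  have hBle : B ≤ (c1:ℤ) * S := by
    rw [hB]
    calc ∑ i ∈ F1, α (σ i - 1) ≤ ∑ i ∈ F1, S := by
          apply Finset.sum_le_sum
          intro i hi
          obtain ⟨hiJ, h2, h3⟩ := hF1mem i hi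
          exact hαS (σ i - 1) (by rw [hJ]; simp only [Finset.mem_Icc]; omega)
      _ = (c1:ℤ) * S := by rw [Finset.sum_const, nsmul_eq_mul, ← hc1]
  have hBA : B ≤ A := by
    rw [hA, hB]
    apply Finset.sum_le_sum
    intro i hi
    obtain ⟨hiJ, h2, h3⟩ := hF1mem i hi
    have hi1 : 1 ≤ i := (Finset.mem_Icc.mp hiJ).1
    have hσi := hσlb i hiJ
    exact hα_sorted i (σ i - 1) hi1 (by omega) (by omega)
  have hAge : (c1:ℤ) ≤ A := by
    rw [hA]
    calc (c1:ℤ) = ∑ _i ∈ F1, (1:ℤ) := by rw [Finset.sum_const, nsmul_eq_mul, ← hc1]; ring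
      _ ≤ ∑ i ∈ F1, α i :=
        Finset.sum_le_sum (fun i hi => hα1 i (hF1mem i hi).1)
  have hE2 := Enn (n+2) (by omega)
  rw [hEn2, hconsF1, hh1] at hE2
  -- exactly k early jobs
  have hc1k : c1 = k := by
    by_contra hne
    have hge : (k:ℤ) + 1 ≤ (c1:ℤ) := by exact_mod_cast (show k + 1 ≤ c1 by omega)
    have q1 : ((k:ℤ)+1) * (S^2*(n:ℤ)^2) ≤ (c1:ℤ) * (S^2*(n:ℤ)^2) :=
      mul_le_mul_of_nonneg_right hge (by positivity)
    have q2 : β * (S*(n:ℤ)) ≤ (S-1) * (S*(n:ℤ)) :=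
      mul_le_mul_of_nonneg_right (by linarith) (by positivity)
    have q3 : S*(n:ℤ) ≤ A * (S*(n:ℤ)) :=
      le_mul_of_one_le_left (by positivity) (by linarith)
    have q4 : S^2*(n:ℤ)*3 ≤ S^2*(n:ℤ)^2 := by
      nlinarith [mul_nonneg (show (0:ℤ) ≤ S^2*(n:ℤ) by positivity)
        (show (0:ℤ) ≤ (n:ℤ)-3 by linarith)]
    have q5 : (0:ℤ) ≤ S^2*(n:ℤ) := by positivity
    nlinarith [hE2, hBle, q1, q2, q3, q4, q5]
  have hc1kz : (c1:ℤ) = (k:ℤ) := by exact_mod_cast hc1k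
  -- A ≤ β
  have hAβ : A ≤ β := by
    by_contra hgt
    have hge : β + 1 ≤ A := by omega
    have q : (β+1)*(S*(n:ℤ)) ≤ A*(S*(n:ℤ)) :=
      mul_le_mul_of_nonneg_right hge (by positivity)
    rw [hc1kz] at hE2 hBle
    nlinarith [hE2, hBle, q]
  -- β ≤ B
  have hETval : energyBefore e h J σ (T+1) = S*(k:ℤ) - β - ((c1:ℤ)*S - B) := by
    have hsplitσ : ∑ i ∈ J, h (σ i) = (c1:ℤ)*S - B := by
      have hsp : ∑ i ∈ J, h (σ i) = (∑ i ∈ F1, h (σ i)) + ∑ i ∈ F2, h (σ i) := by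
        rw [hF1, hF2]
        exact (Finset.sum_filter_add_sum_filter_not J _ _).symm
      have hF2zero : ∑ i ∈ F2, h (σ i) = 0 := by
        apply Finset.sum_eq_zero
        intro i hi
        obtain ⟨hiJ, h3, h4⟩ := hF2mem i hi
        exact hh4 (σ i) h3 h4
      have hF1h : ∑ i ∈ F1, h (σ i) = (c1:ℤ)*S - B := by
        have hcongr : ∀ i ∈ F1, h (σ i) = S - α (σ i - 1) := by
          intro i hi
          obtain ⟨hiJ, h2, h3⟩ := hF1mem i hi
          exact hh2 (σ i) h2 h3
        rw [Finset.sum_congr rfl hcongr, Finset.sum_sub_distrib, Finset.sum_const,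
          nsmul_eq_mul, ← hB, ← hc1]
      rw [hsp, hF1h, hF2zero, add_zero]
    rw [hET, hsumT, hsume, hh1, hh3, hsplitσ]
    ring
  have hβB : β ≤ B := by
    have hE3 := Enn (T+1) le_rfl
    rw [hETval, hc1kz] at hE3
    linarith
  have hAβval : A = β := le_antisymm hAβ (le_trans hβB hBA)
  -- assemble
  refine ⟨?_, ?_, fun i hi => ⟨hσne1 i hi, hσne i hi⟩, ?_, ?_⟩
  · rw [hEarlyEq, ← hc1]; exact hc1k
  · rw [hLateEq]; omega
  · rw [hEarlyEq]
    have hsumE : ∑ i ∈ F1, e i = (c1:ℤ)*(S^2*(n:ℤ)^2) + A*(S*(n:ℤ)) := by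
      rw [Finset.sum_congr rfl (fun i _ => he i), Finset.sum_add_distrib, Finset.sum_const,
        ← Finset.sum_mul, nsmul_eq_mul, ← hA, ← hc1]
    rw [hsumE, hc1kz, hAβval]
  · rw [hEarlyEq, ← hA]; exact hAβval
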